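/- Let S and T be measurable spaces. A map s ↦ μ_s from S to M(M(T)) (finite measures on the space of finite measures on T) is measurable — i.e., is a kernel from S to M(T) — if and only if, for every bounded measurable function h : T → [0,∞), the map s ↦ ∫_{M(T)} exp(−ν(h)) dμ_s(ν) is measurable from S to [0,∞]. -/

import Mathlib

open MeasureTheory Set Filter Topology

namespace KernelExpAux

/-- Polynomials uniformly bounded by 2 on `[0,1]` converging pointwise on `[0,1]`
to the indicator of `(c, ∞)`. -/
lemma exists_qseq (c : ℝ) :
    ∃ q : ℕ → Polynomial ℝ,
      (∀ n, ∀ u ∈ Icc (0:ℝ) 1, |(q n).eval u| ≤ 2) ∧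
      (∀ u ∈ Icc (0:ℝ) 1,
        Tendsto (fun n => (q n).eval u) atTop (𝓝 (if c < u then 1 else 0))) := by
  classical
  have hg : ∀ n : ℕ, ContinuousOn (fun u : ℝ => max 0 (min 1 ((n : ℝ) * (u - c))))
      (Icc (0:ℝ) 1) := by
    intro n
    exact (continuous_const.max (continuous_const.min
      ((continuous_const.mul (continuous_id.sub continuous_const))))).continuousOn
  have hpos : ∀ n : ℕ, (0:ℝ) < 1 / (n + 1) := by
    intro n; positivity
  choose q hq using fun n : ℕ =>
    exists_polynomial_near_of_continuousOn 0 1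
      (fun u : ℝ => max 0 (min 1 ((n : ℝ) * (u - c)))) (hg n) (1 / ((n : ℝ) + 1)) (hpos n)
  have gmem : ∀ (n : ℕ) (u : ℝ), max 0 (min 1 ((n : ℝ) * (u - c))) ∈ Icc (0:ℝ) 1 := by
    intro n u
    constructor
    · exact le_max_left _ _
    · exact max_le (by norm_num) (min_le_left _ _)
  refine ⟨q, ?_, ?_⟩
  · intro n u hu
    have h1 := hq n u hu
    have h2 := gmem n u
    have htri : |(q n).eval u| ≤ |(q n).eval u - max 0 (min 1 ((n : ℝ) * (u - c)))|
        + |max 0 (min 1 ((n : ℝ) * (u - c)))| := by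
      have := abs_add_le ((q n).eval u - max 0 (min 1 ((n : ℝ) * (u - c))))
        (max 0 (min 1 ((n : ℝ) * (u - c))))
      simpa using this
    have habs : |max 0 (min 1 ((n : ℝ) * (u - c)))| ≤ 1 := by
      rw [abs_of_nonneg (gmem n u).1]; exact (gmem n u).2
    have hfr : 1 / ((n:ℝ) + 1) ≤ 1 := by
      rw [div_le_one (by positivity)]; linarith [Nat.cast_nonneg (α := ℝ) n]
    linarith [h1, htri, habs, hfr]
  · intro u hu
    -- g n u → indicator
    have hgt : Tendsto (fun n : ℕ => max 0 (min 1 ((n : ℝ) * (u - c)))) atTop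
        (𝓝 (if c < u then 1 else 0)) := by
      by_cases hcu : c < u
      · simp only [hcu, if_true]
        apply tendsto_atTop_of_eventually_const (i₀ := ⌈1 / (u - c)⌉₊)
        intro n hn
        have hu0 : 0 < u - c := sub_pos.2 hcu
        have : 1 / (u - c) ≤ (n : ℝ) := le_trans (Nat.le_ceil _) (by exact_mod_cast hn)
        have h1 : (1:ℝ) ≤ (n : ℝ) * (u - c) := by
          rw [div_le_iff₀ hu0] at this; linarith
        rw [min_eq_left h1, max_eq_right (by norm_num)]
      · simp only [hcu, if_false]
        have : ∀ n : ℕ, max 0 (min 1 ((n : ℝ) * (u - c))) = 0 := by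
          intro n
          have h0 : (n : ℝ) * (u - c) ≤ 0 :=
            mul_nonpos_iff.2 (Or.inl ⟨Nat.cast_nonneg n, by linarith [not_lt.1 hcu]⟩)
          rw [min_eq_right (by linarith), max_eq_left h0]
        simp only [this]; exact tendsto_const_nhds
    have hdiff : Tendsto (fun n : ℕ =>
        (q n).eval u - max 0 (min 1 ((n : ℝ) * (u - c)))) atTop (𝓝 0) := by
      have hb : ∀ n : ℕ, ‖(q n).eval u - max 0 (min 1 ((n : ℝ) * (u - c)))‖
          ≤ 1 / ((n : ℝ) + 1) := fun n => le_of_lt (hq n u hu)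
      exact squeeze_zero_norm hb tendsto_one_div_add_atTop_nhds_zero_nat
    have := hdiff.add hgt
    simp only [zero_add, sub_add_cancel] at this
    exact this

/-- For each threshold `a : ℝ≥0∞` there are polynomials, bounded by 2 on `[0,1]`,
with `qₙ(e^{-x}) → 1_{x < a}` for every finite `x`. -/
lemma exists_Q (a : ENNReal) :
    ∃ q : ℕ → Polynomial ℝ,
      (∀ n, ∀ u ∈ Icc (0:ℝ) 1, |(q n).eval u| ≤ 2) ∧
      (∀ x : ENNReal, x ≠ ⊤ →
        Tendsto (fun n => (q n).eval (Real.exp (-x.toReal))) atTop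
          (𝓝 (if x < a then 1 else 0))) := by
  by_cases ha : a = ⊤
  · refine ⟨fun _ => 1, ?_, ?_⟩
    · intro n u _; simp
    · intro x hx
      have : x < a := ha ▸ lt_top_iff_ne_top.2 hx
      simp [this]
  · obtain ⟨q, hb, hconv⟩ := exists_qseq (Real.exp (-a.toReal))
    refine ⟨q, hb, ?_⟩
    intro x hx
    have hmem : Real.exp (-x.toReal) ∈ Icc (0:ℝ) 1 := by
      constructor
      · exact (Real.exp_pos _).le
      · exact Real.exp_le_one_iff.2 (neg_nonpos.2 ENNReal.toReal_nonneg)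
    have := hconv _ hmem
    have hiff : (Real.exp (-a.toReal) < Real.exp (-x.toReal)) ↔ x < a := by
      rw [Real.exp_lt_exp, neg_lt_neg_iff, ENNReal.toReal_lt_toReal hx ha]
    simpa [hiff] using this

variable {T : Type*} [MeasurableSpace T]

/-- The space of finite measures on `T` as a subtype. -/
abbrev FM (T : Type*) [MeasurableSpace T] := {ν : Measure T // IsFiniteMeasure ν}

/-- The Laplace-type functional `ν ↦ exp (-ν h)`. -/
noncomputable def expFn (h : T → NNReal) : FM T → ℝ :=
  fun ν => Real.exp (-(∫⁻ t, (h t : ENNReal) ∂ν.1).toReal)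

/-- The collection of Laplace functionals for bounded measurable `h`. -/
def expSet (T : Type*) [MeasurableSpace T] : Set (FM T → ℝ) :=
  {F | ∃ h : T → NNReal, Measurable h ∧ (∃ C, ∀ t, h t ≤ C) ∧ F = expFn h}

lemma lint_ne_top {h : T → NNReal} {C : NNReal} (hC : ∀ t, h t ≤ C) (ν : FM T) :
    ∫⁻ t, (h t : ENNReal) ∂ν.1 ≠ ⊤ := by
  haveI := ν.2
  have hle : ∫⁻ t, (h t : ENNReal) ∂ν.1 ≤ ∫⁻ _, (C : ENNReal) ∂ν.1 :=
    lintegral_mono fun t => ENNReal.coe_le_coe.2 (hC t)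
  rw [lintegral_const] at hle
  exact ne_top_of_le_ne_top (ENNReal.mul_ne_top ENNReal.coe_ne_top
    (measure_ne_top ν.1 _)) hle

lemma expFn_measurable {h : T → NNReal} (hh : Measurable h) : Measurable (expFn h) := by
  have h1 : Measurable fun ν : Measure T => ∫⁻ t, (h t : ENNReal) ∂ν :=
    Measure.measurable_lintegral (measurable_coe_nnreal_ennreal.comp hh)
  exact Real.measurable_exp.comp
    (((h1.comp measurable_subtype_coe).ennreal_toReal).neg)

lemma expFn_bound (h : T → NNReal) (ν : FM T) : expFn h ν ∈ Icc (0:ℝ) 1 := by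
  refine ⟨(Real.exp_pos _).le, ?_⟩
  exact Real.exp_le_one_iff.2 (neg_nonpos.2 ENNReal.toReal_nonneg)

lemma one_mem_expSet : (1 : FM T → ℝ) ∈ expSet T := by
  refine ⟨0, measurable_const, ⟨0, fun t => le_rfl⟩, ?_⟩
  funext ν
  simp [expFn]

lemma expSet_mul {F G : FM T → ℝ} (hF : F ∈ expSet T) (hG : G ∈ expSet T) :
    F * G ∈ expSet T := by
  obtain ⟨h, hh, ⟨C, hC⟩, rfl⟩ := hF
  obtain ⟨g, hg, ⟨D, hD⟩, rfl⟩ := hG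
  refine ⟨h + g, hh.add hg, ⟨C + D, fun t => add_le_add (hC t) (hD t)⟩, ?_⟩
  funext ν
  haveI := ν.2
  have hco : ∀ t, (((h + g) t : NNReal) : ENNReal) = (h t : ENNReal) + (g t : ENNReal) := by
    intro t; push_cast [Pi.add_apply]; ring
  have hsum : ∫⁻ t, (((h + g) t : NNReal) : ENNReal) ∂ν.1
      = (∫⁻ t, (h t : ENNReal) ∂ν.1) + ∫⁻ t, (g t : ENNReal) ∂ν.1 := by
    simp only [hco]
    exact lintegral_add_left (measurable_coe_nnreal_ennreal.comp hh) _
  simp only [Pi.mul_apply, expFn, hsum,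
    ENNReal.toReal_add (lint_ne_top hC ν) (lint_ne_top hD ν), neg_add, Real.exp_add]

lemma span_expSet_mul {F G : FM T → ℝ} (hF : F ∈ Submodule.span ℝ (expSet T))
    (hG : G ∈ Submodule.span ℝ (expSet T)) :
    F * G ∈ Submodule.span ℝ (expSet T) := by
  induction hF, hG using Submodule.span_induction₂ with
  | mem_mem x y hx hy => exact Submodule.subset_span (expSet_mul hx hy)
  | zero_left y hy => simpa using Submodule.zero_mem _
  | zero_right x hx => simpa using Submodule.zero_mem _
  | add_left x y z _ _ _ h1 h2 => rw [add_mul]; exact Submodule.add_mem _ h1 h2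
  | add_right x y z _ _ _ h1 h2 => rw [mul_add]; exact Submodule.add_mem _ h1 h2
  | smul_left r x y _ _ h1 => rw [smul_mul_assoc]; exact Submodule.smul_mem _ _ h1
  | smul_right r x y _ _ h1 => rw [mul_smul_comm]; exact Submodule.smul_mem _ _ h1

lemma measurable_eval {B : Set T} (hB : MeasurableSet B) :
    Measurable fun ν : FM T => ν.1 B :=
  (Measure.measurable_coe hB).comp measurable_subtype_coe

lemma pow_mem_expSet {B : Set T} (hB : MeasurableSet B) (k : ℕ) :
    (fun ν : FM T => Real.exp (-(ν.1 B).toReal) ^ k) ∈ expSet T := by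
  refine ⟨B.indicator fun _ => (k : NNReal), measurable_const.indicator hB,
    ⟨k, fun t => ?_⟩, ?_⟩
  · classical
    by_cases ht : t ∈ B <;> simp [Set.indicator, ht]
  · funext ν
    haveI := ν.2
    have hlint : ∫⁻ t, ((B.indicator (fun _ => (k : NNReal)) t : NNReal) : ENNReal) ∂ν.1
        = (k : ENNReal) * ν.1 B := by
      have : ∀ t, ((B.indicator (fun _ => (k : NNReal)) t : NNReal) : ENNReal)
          = B.indicator (fun _ => ((k : NNReal) : ENNReal)) t := fun t =>
        ENNReal.coe_indicator B _ t
      simp only [this]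
      rw [lintegral_indicator_const hB]
      norm_cast
    rw [expFn, hlint]
    rw [ENNReal.toReal_mul]
    have hk : ((k : ENNReal)).toReal = (k : ℝ) := by simp
    rw [hk, ← Real.exp_nat_mul]
    ring_nf

lemma poly_mem_span {B : Set T} (hB : MeasurableSet B) (q : Polynomial ℝ) :
    (fun ν : FM T => q.eval (Real.exp (-(ν.1 B).toReal)))
      ∈ Submodule.span ℝ (expSet T) := by
  have : (fun ν : FM T => q.eval (Real.exp (-(ν.1 B).toReal)))
      = ∑ i ∈ Finset.range (q.natDegree + 1),
          q.coeff i • fun ν : FM T => Real.exp (-(ν.1 B).toReal) ^ i := by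
    funext ν
    rw [Polynomial.eval_eq_sum_range]
    simp [Finset.sum_apply]
  rw [this]
  exact Submodule.sum_mem _ fun i _ =>
    Submodule.smul_mem _ _ (Submodule.subset_span (pow_mem_expSet hB i))

/-- Basic sets: finite intersections of sets `{ν | ν B < a}`. -/
def listSet (l : List (Set T × ENNReal)) : Set (FM T) := {ν | ∀ p ∈ l, ν.1 p.1 < p.2}

/-- The π-system of basic sets. -/
def cyl (T : Type*) [MeasurableSpace T] : Set (Set (FM T)) :=
  {E | ∃ l : List (Set T × ENNReal), (∀ p ∈ l, MeasurableSet p.1) ∧ E = listSet l}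

lemma measurableSet_listSet {l : List (Set T × ENNReal)}
    (hl : ∀ p ∈ l, MeasurableSet p.1) : MeasurableSet (listSet l) := by
  induction l with
  | nil =>
    have : listSet ([] : List (Set T × ENNReal)) = Set.univ := by
      ext ν; simp [listSet]
    rw [this]; exact MeasurableSet.univ
  | cons p l ih =>
    have : listSet (p :: l) = ((fun ν : FM T => ν.1 p.1) ⁻¹' Iio p.2) ∩ listSet l := by
      ext ν; simp [listSet]
    rw [this]
    exact ((measurable_eval (hl p (List.mem_cons_self))) measurableSet_Iio).inter
      (ih fun q hq => hl q (List.mem_cons_of_mem _ hq))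

lemma isPiSystem_cyl : IsPiSystem (cyl T) := by
  rintro E1 ⟨l1, h1, rfl⟩ E2 ⟨l2, h2, rfl⟩ -
  refine ⟨l1 ++ l2, ?_, ?_⟩
  · intro p hp
    rcases List.mem_append.1 hp with h | h
    · exact h1 p h
    · exact h2 p h
  · ext ν
    simp only [listSet, Set.mem_inter_iff, Set.mem_setOf_eq, List.mem_append]
    constructor
    · rintro ⟨ha, hb⟩ p hp
      rcases hp with h | h
      · exact ha p h
      · exact hb p h
    · intro h
      exact ⟨fun p hp => h p (Or.inl hp), fun p hp => h p (Or.inr hp)⟩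

lemma fm_measurableSpace_eq :
    (inferInstance : MeasurableSpace (FM T)) = MeasurableSpace.generateFrom (cyl T) := by
  refine le_antisymm ?_ ?_
  · letI m : MeasurableSpace (FM T) := MeasurableSpace.generateFrom (cyl T)
    have hval : @Measurable (FM T) (Measure T) m _ Subtype.val := by
      apply Measure.measurable_of_measurable_coe
      intro B hB
      apply measurable_of_Iio
      intro a
      have : (fun ν : FM T => ν.1 B) ⁻¹' Iio a = listSet [(B, a)] := by
        ext ν; simp [listSet]
      rw [this]
      exact MeasurableSpace.measurableSet_generateFrom
        ⟨[(B, a)], by simpa using hB, rfl⟩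
    exact measurable_iff_comap_le.1 hval
  · refine MeasurableSpace.generateFrom_le ?_
    rintro E ⟨l, hl, rfl⟩
    exact measurableSet_listSet hl

section Kernel

variable {S : Type*} [MeasurableSpace S]
variable (μ : S → {m : Measure (FM T) // IsFiniteMeasure m})
variable (H : ∀ h : T → NNReal, Measurable h → (∃ C, ∀ t, h t ≤ C) →
  Measurable (fun s =>
    ∫⁻ ν : FM T,
      ENNReal.ofReal (Real.exp (-(∫⁻ t, (h t : ENNReal) ∂ν.1).toReal)) ∂(μ s).1))

include H in
lemma span_good {F : FM T → ℝ} (hF : F ∈ Submodule.span ℝ (expSet T)) :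
    Measurable F ∧ (∀ s, Integrable F (μ s).1) ∧
      Measurable fun s => ∫ ν, F ν ∂(μ s).1 := by
  induction hF using Submodule.span_induction with
  | mem F hFmem =>
    obtain ⟨h, hh, hC, rfl⟩ := hFmem
    obtain ⟨C, hCle⟩ := hC
    refine ⟨expFn_measurable hh, fun s => ?_, ?_⟩
    · haveI := (μ s).2
      refine (integrable_const (1:ℝ)).mono'
        (expFn_measurable hh).aestronglyMeasurable (ae_of_all _ fun ν => ?_)
      rw [Real.norm_eq_abs, abs_of_nonneg (expFn_bound h ν).1]
      exact (expFn_bound h ν).2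
    · have key : ∀ s, ∫ ν, expFn h ν ∂(μ s).1
          = (∫⁻ ν, ENNReal.ofReal (expFn h ν) ∂(μ s).1).toReal := fun s =>
        integral_eq_lintegral_of_nonneg_ae (ae_of_all _ fun ν => (expFn_bound h ν).1)
          (expFn_measurable hh).aestronglyMeasurable
      simp only [key]
      exact (H h hh ⟨C, hCle⟩).ennreal_toReal
  | zero =>
    refine ⟨measurable_const, fun s => ?_, ?_⟩
    · exact integrable_zero _ _ _
    · simp only [Pi.zero_apply, integral_zero]
      exact measurable_const
  | add x y hx hy ihx ihy =>
    obtain ⟨hmx, hix, hmix⟩ := ihx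
    obtain ⟨hmy, hiy, hmiy⟩ := ihy
    refine ⟨hmx.add hmy, fun s => (hix s).add (hiy s), ?_⟩
    have : ∀ s, ∫ ν, (x + y) ν ∂(μ s).1 = (∫ ν, x ν ∂(μ s).1) + ∫ ν, y ν ∂(μ s).1 := by
      intro s
      simp only [Pi.add_apply]
      exact integral_add (hix s) (hiy s)
    simp only [this]
    exact hmix.add hmiy
  | smul r x hx ihx =>
    obtain ⟨hmx, hix, hmix⟩ := ihx
    refine ⟨hmx.const_smul r, fun s => (hix s).smul r, ?_⟩
    have : ∀ s, ∫ ν, (r • x) ν ∂(μ s).1 = r • ∫ ν, x ν ∂(μ s).1 := by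
      intro s
      simp only [Pi.smul_apply]
      exact integral_smul r x
    simp only [this]
    exact hmix.const_smul r

include H in
lemma basic_case (l : List (Set T × ENNReal)) (hl : ∀ p ∈ l, MeasurableSet p.1) :
    Measurable fun s => (μ s).1 (listSet l) := by
  classical
  choose Q hQb hQc using fun a : ENNReal => exists_Q a
  -- the approximating functions
  set pseq : ℕ → FM T → ℝ := fun n ν =>
    (l.map fun p => (Q p.2 n).eval (Real.exp (-(ν.1 p.1).toReal))).prod with hpseq
  -- membership in the span
  have hmem : ∀ (l' : List (Set T × ENNReal)), (∀ p ∈ l', MeasurableSet p.1) → ∀ n,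
      (fun ν : FM T =>
        (l'.map fun p => (Q p.2 n).eval (Real.exp (-(ν.1 p.1).toReal))).prod)
        ∈ Submodule.span ℝ (expSet T) := by
    intro l' hl' n
    induction l' with
    | nil =>
      simp only [List.map_nil, List.prod_nil]
      exact Submodule.subset_span one_mem_expSet
    | cons p l'' ih =>
      simp only [List.map_cons, List.prod_cons]
      exact span_expSet_mul
        (poly_mem_span (hl' p (List.mem_cons_self)) _)
        (ih fun q hq => hl' q (List.mem_cons_of_mem _ hq))
  -- pointwise convergence to the indicator
  have htend : ∀ (l' : List (Set T × ENNReal)) (ν : FM T),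
      Tendsto (fun n =>
          (l'.map fun p => (Q p.2 n).eval (Real.exp (-(ν.1 p.1).toReal))).prod)
        atTop (𝓝 (if ∀ p ∈ l', ν.1 p.1 < p.2 then 1 else 0)) := by
    intro l' ν
    haveI := ν.2
    induction l' with
    | nil => simp
    | cons p l'' ih =>
      simp only [List.map_cons, List.prod_cons]
      have h1 := hQc p.2 (ν.1 p.1) (measure_ne_top ν.1 p.1)
      have := h1.mul ih
      have heq : (if ν.1 p.1 < p.2 then (1:ℝ) else 0)
            * (if ∀ q ∈ l'', ν.1 q.1 < q.2 then 1 else 0)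
          = if ∀ q ∈ p :: l'', ν.1 q.1 < q.2 then 1 else 0 := by
        have hcons : (∀ q ∈ p :: l'', ν.1 q.1 < q.2)
            ↔ (ν.1 p.1 < p.2 ∧ ∀ q ∈ l'', ν.1 q.1 < q.2) :=
          List.forall_mem_cons
        by_cases hp : ν.1 p.1 < p.2 <;> by_cases hq : ∀ q ∈ l'', ν.1 q.1 < q.2
        · rw [if_pos hp, if_pos hq, if_pos (hcons.2 ⟨hp, hq⟩), one_mul]
        · rw [if_pos hp, if_neg hq, if_neg (fun hc => hq (hcons.1 hc).2), mul_zero]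
        · rw [if_neg hp, if_pos hq, if_neg (fun hc => hp (hcons.1 hc).1), zero_mul]
        · rw [if_neg hp, if_neg hq, if_neg (fun hc => hp (hcons.1 hc).1), zero_mul]
      rwa [heq] at this
  -- uniform bound
  have hbound : ∀ (l' : List (Set T × ENNReal)) (n : ℕ) (ν : FM T),
      |(l'.map fun p => (Q p.2 n).eval (Real.exp (-(ν.1 p.1).toReal))).prod|
        ≤ 2 ^ l'.length := by
    intro l' n ν
    induction l' with
    | nil => simp
    | cons p l'' ih =>
      simp only [List.map_cons, List.prod_cons, List.length_cons, abs_mul]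
      have hu : Real.exp (-((ν.1 p.1)).toReal) ∈ Icc (0:ℝ) 1 :=
        ⟨(Real.exp_pos _).le, Real.exp_le_one_iff.2 (neg_nonpos.2 ENNReal.toReal_nonneg)⟩
      have h2 := hQb p.2 n _ hu
      calc |(Q p.2 n).eval (Real.exp (-(ν.1 p.1).toReal))|
            * |(l''.map fun p => (Q p.2 n).eval (Real.exp (-(ν.1 p.1).toReal))).prod|
          ≤ 2 * 2 ^ l''.length := by
            exact mul_le_mul h2 ih (abs_nonneg _) (by norm_num)
        _ = 2 ^ (l''.length + 1) := by ring
  have hE : MeasurableSet (listSet l) := measurableSet_listSet hl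
  -- convergence of the integrals
  have hkey : ∀ s, Tendsto (fun n => ∫ ν, pseq n ν ∂(μ s).1) atTop
      (𝓝 (((μ s).1 (listSet l)).toReal)) := by
    intro s
    haveI := (μ s).2
    have hdc := tendsto_integral_of_dominated_convergence
      (μ := (μ s).1) (F := fun n ν => pseq n ν)
      (f := (listSet l).indicator fun _ => (1:ℝ))
      (bound := fun _ => (2:ℝ) ^ l.length)
      (fun n => ((span_good μ H (hmem l hl n)).1).aestronglyMeasurable)
      (integrable_const _)
      (fun n => ae_of_all _ fun ν => by
        rw [Real.norm_eq_abs]; exact hbound l n ν)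
      (ae_of_all _ fun ν => by
        have := htend l ν
        have hind : (listSet l).indicator (fun _ => (1:ℝ)) ν
            = if ∀ p ∈ l, ν.1 p.1 < p.2 then 1 else 0 := by
          simp [Set.indicator_apply, listSet, Set.mem_setOf_eq]
        rw [hind]
        exact this)
    rwa [integral_indicator_const (1:ℝ) hE, smul_eq_mul, mul_one] at hdc
  have hmeas : Measurable fun s => (((μ s).1 (listSet l))).toReal := by
    apply measurable_of_tendsto_metrizable
      (f := fun n s => ∫ ν, pseq n ν ∂(μ s).1)
    · intro n
      exact (span_good μ H (hmem l hl n)).2.2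
    · exact tendsto_pi_nhds.2 hkey
  have hfin : (fun s => (μ s).1 (listSet l))
      = fun s => ENNReal.ofReal (((μ s).1 (listSet l)).toReal) := by
    funext s
    haveI := (μ s).2
    rw [ENNReal.ofReal_toReal (measure_ne_top _ _)]
  rw [hfin]
  exact hmeas.ennreal_ofReal

end Kernel

end KernelExpAux


/-- Lemma 1 of the paper: let `S`, `T` be measurable spaces. A map
`s ↦ μ_s` from `S` to `M(M(T))` (the finite measures on the space `M(T)` of finite
measures on `T`, each space of measures carrying the σ-algebra generated by the
evaluation maps) is measurable — i.e. is a kernel from `S` to `M(T)` — if and only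
if for every bounded measurable `h : T → [0,∞)` the map
`s ↦ ∫_{M(T)} exp (−ν(h)) dμ_s(ν)` is measurable from `S` to `[0,∞]`. -/
theorem kernel_iff_exp_integrals_measurable (S T : Type*) [MeasurableSpace S]
    [MeasurableSpace T]
    (μ : S → {m : Measure {ν : Measure T // IsFiniteMeasure ν} // IsFiniteMeasure m}) :
    Measurable μ ↔
      ∀ h : T → NNReal, Measurable h → (∃ C, ∀ t, h t ≤ C) →
        Measurable (fun s =>
          ∫⁻ ν : {ν : Measure T // IsFiniteMeasure ν},
            ENNReal.ofReal (Real.exp (-(∫⁻ t, (h t : ENNReal) ∂ν.1).toReal)) ∂(μ s).1) := by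
  constructor
  · intro hμ h hh _
    have hg : Measurable fun ν : KernelExpAux.FM T =>
        ENNReal.ofReal (Real.exp (-(∫⁻ t, (h t : ENNReal) ∂ν.1).toReal)) := by
      have h1 : Measurable fun m : Measure T => ∫⁻ t, (h t : ENNReal) ∂m :=
        Measure.measurable_lintegral (measurable_coe_nnreal_ennreal.comp hh)
      exact (Real.measurable_exp.comp
        ((h1.comp measurable_subtype_coe).ennreal_toReal.neg)).ennreal_ofReal
    have hcoe : Measurable fun s => (μ s).1 := measurable_subtype_coe.comp hμ
    exact (Measure.measurable_lintegral hg).comp hcoe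
  · intro H
    have key : ∀ ⦃E : Set (KernelExpAux.FM T)⦄, MeasurableSet E →
        Measurable fun s => (μ s).1 E := by
      refine MeasurableSpace.induction_on_inter
        (C := fun E _ => Measurable fun s => (μ s).1 E)
        KernelExpAux.fm_measurableSpace_eq KernelExpAux.isPiSystem_cyl ?_ ?_ ?_ ?_
      · simp only [measure_empty]
        exact measurable_const
      · rintro E ⟨l, hl, rfl⟩
        exact KernelExpAux.basic_case μ H l hl
      · intro E hE hmE
        have huniv : Measurable fun s => (μ s).1 Set.univ := by
          have hb := KernelExpAux.basic_case μ H [] (by simp)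
          have heq : KernelExpAux.listSet ([] : List (Set T × ENNReal))
              = (Set.univ : Set (KernelExpAux.FM T)) := by
            ext ν; simp [KernelExpAux.listSet]
          rwa [heq] at hb
        have hcompl : (fun s => (μ s).1 Eᶜ)
            = fun s => (μ s).1 Set.univ - (μ s).1 E := by
          funext s
          haveI := (μ s).2
          rw [measure_compl hE (measure_ne_top _ _)]
        rw [hcompl]
        exact huniv.sub hmE
      · intro f hdisj hfmeas hC
        have hun : (fun s => (μ s).1 (⋃ i, f i)) = fun s => ∑' i, (μ s).1 (f i) := by
          funext s
          exact measure_iUnion hdisj hfmeas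
        rw [hun]
        exact Measurable.ennreal_tsum hC
    have hval : Measurable fun s => (μ s).1 :=
      Measure.measurable_of_measurable_coe _ fun E hE => key hE
    exact hval.subtype_mk
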